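/- Let S be an inverse semigroup, ρ a left congruence on S with trace τ and kernel K. Then InK(ρ) = K ∩ N(τ), where N(τ) is the normaliser of τ. In particular, if a ∈ K and both conjugation maps by a and a⁻¹ preserve τ, then a ρ aa⁻¹. -/
import Mathlib


class InverseSemigroup (S : Type*) extends Semigroup S where
  inv : S → S
  mul_inv_mul : ∀ a : S, a * inv a * a = a
  inv_mul_inv : ∀ a : S, inv a * a * inv a = inv a
  inv_unique : ∀ a b : S, a * b * a = a → b * a * b = b → b = inv a

open InverseSemigroup

/-- `e` is an idempotent. -/
def IsIdem {S : Type*} [Mul S] (e : S) : Prop := e * e = e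

/-- `r` is a left congruence: an equivalence relation compatible with left multiplication. -/
def IsLeftCongruence {S : Type*} [Semigroup S] (r : S → S → Prop) : Prop :=
  Equivalence r ∧ ∀ a b c : S, r a b → r (c * a) (c * b)

/-- The inverse kernel of a relation: elements related to `a * a⁻¹`. -/
def InK {S : Type*} [InverseSemigroup S] (r : S → S → Prop) : Set S :=
  {a | r a (a * inv a)}

/-- The kernel: elements related to some idempotent. -/
def lker {S : Type*} [InverseSemigroup S] (r : S → S → Prop) : Set S :=
  {a | ∃ e, IsIdem e ∧ r a e}

/-- `τ` is a congruence on the semilattice of idempotents `E(S)`. -/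
def IsECong {S : Type*} [InverseSemigroup S] (τ : S → S → Prop) : Prop :=
  (∀ e f, τ e f → IsIdem e ∧ IsIdem f) ∧
  (∀ e, IsIdem e → τ e e) ∧
  (∀ e f, τ e f → τ f e) ∧
  (∀ e f g, τ e f → τ f g → τ e g) ∧
  (∀ e f g, IsIdem g → τ e f → τ (g * e) (g * f))

/-- The normaliser of a congruence on the idempotents. -/
def normaliser {S : Type*} [InverseSemigroup S] (τ : S → S → Prop) : Set S :=
  {a | ∀ e f, τ e f → τ (a * e * inv a) (a * f * inv a) ∧ τ (inv a * e * a) (inv a * f * a)}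

/-- `T` is a full inverse subsemigroup of `S`. -/
def IsFullInverseSub {S : Type*} [InverseSemigroup S] (T : Set S) : Prop :=
  (∀ e : S, IsIdem e → e ∈ T) ∧ (∀ a b, a ∈ T → b ∈ T → a * b ∈ T) ∧
  (∀ a, a ∈ T → inv a ∈ T)

section Aux
variable {S : Type*} [InverseSemigroup S]

lemma inv_inv' (a : S) : inv (inv a) = a :=
  (inv_unique (inv a) a (inv_mul_inv a) (mul_inv_mul a)).symm

lemma idem_mul_inv (a : S) : IsIdem (a * inv a) := by
  show a * inv a * (a * inv a) = a * inv a
  rw [← mul_assoc, mul_inv_mul]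

lemma idem_inv_mul (a : S) : IsIdem (inv a * a) := by
  show inv a * a * (inv a * a) = inv a * a
  rw [← mul_assoc, inv_mul_inv]

lemma idem_self_inv {e : S} (he : IsIdem e) : inv e = e := by
  refine (inv_unique e e ?_ ?_).symm <;> rw [he, he]

lemma idem_mul {e f : S} (he : IsIdem e) (hf : IsIdem f) : IsIdem (e * f) := by
  set x := inv (e * f) with hx
  have he' : ∀ y : S, e * (e * y) = e * y := fun y => by rw [← mul_assoc, he]
  have hf' : ∀ y : S, f * (f * y) = f * y := fun y => by rw [← mul_assoc, hf]
  have key : e * (f * (x * (e * f))) = e * f := by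
    have := mul_inv_mul (e * f); rw [← hx] at this
    simpa only [mul_assoc] using this
  have key2 : x * (e * (f * x)) = x := by
    have := inv_mul_inv (e * f); rw [← hx] at this
    simpa only [mul_assoc] using this
  have A : (e * f) * (f * x * e) * (e * f) = e * f := by
    simp only [mul_assoc, he', hf']; exact key
  have B : (f * x * e) * (e * f) * (f * x * e) = f * x * e := by
    simp only [mul_assoc, he', hf']
    have : x * (e * (f * (x * e))) = x * e := by
      have := congrArg (· * e) key2
      simpa only [mul_assoc] using this
    rw [this]
  have hfxe : f * x * e = x := by rw [inv_unique (e * f) (f * x * e) A B, hx]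
  have key2e : x * (e * (f * (x * e))) = x * e := by
    have := congrArg (· * e) key2
    simpa only [mul_assoc] using this
  have hxx : IsIdem x := by
    show x * x = x
    have h2 : x * x = f * x * e * (f * x * e) := by rw [hfxe]
    rw [h2]
    calc f * x * e * (f * x * e) = f * (x * (e * (f * (x * e)))) := by simp only [mul_assoc]
      _ = f * (x * e) := by rw [key2e]
      _ = x := by rw [← mul_assoc, hfxe]
  have hefx : e * f = x := by
    rw [← idem_self_inv hxx, hx]
    exact (inv_inv' _).symm
  rw [hefx]; exact hxx

lemma idem_comm {e f : S} (he : IsIdem e) (hf : IsIdem f) : e * f = f * e := by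
  have hef := idem_mul he hf
  have hfe := idem_mul hf he
  have he' : ∀ y : S, e * (e * y) = e * y := fun y => by rw [← mul_assoc, he]
  have hf' : ∀ y : S, f * (f * y) = f * y := fun y => by rw [← mul_assoc, hf]
  have A : (e * f) * (f * e) * (e * f) = e * f := by
    simp only [mul_assoc, he', hf']
    have h2 : (e * f) * (e * f) = e * f := hef
    simpa only [mul_assoc] using h2
  have B : (f * e) * (e * f) * (f * e) = f * e := by
    simp only [mul_assoc, he', hf']
    have h2 : (f * e) * (f * e) = f * e := hfe
    simpa only [mul_assoc] using h2
  have := inv_unique (e * f) (f * e) A B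
  rw [this, idem_self_inv hef]

lemma conj_idem {e : S} (a : S) (he : IsIdem e) : IsIdem (a * e * inv a) := by
  show a * e * inv a * (a * e * inv a) = a * e * inv a
  have : e * (inv a * a) = inv a * a * e := idem_comm he (idem_inv_mul a)
  calc a * e * inv a * (a * e * inv a) = a * (e * (inv a * a)) * (e * inv a) := by
        simp only [mul_assoc]
    _ = a * (inv a * a * e) * (e * inv a) := by rw [this]
    _ = a * inv a * a * (e * (e * inv a)) := by simp only [mul_assoc]
    _ = a * (e * (e * inv a)) := by rw [mul_inv_mul]
    _ = a * e * inv a := by rw [← mul_assoc e, he, mul_assoc]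

lemma conj_absorb {e : S} (a : S) (he : IsIdem e) : a * e * inv a * a = a * e := by
  have : e * (inv a * a) = inv a * a * e := idem_comm he (idem_inv_mul a)
  calc a * e * inv a * a = a * (e * (inv a * a)) := by simp only [mul_assoc]
    _ = a * (inv a * a * e) := by rw [this]
    _ = a * inv a * a * e := by simp only [mul_assoc]
    _ = a * e := by rw [mul_inv_mul]

end Aux

theorem stmt4 {S : Type*} [InverseSemigroup S] (r : S → S → Prop)
    (hr : IsLeftCongruence r) :
    InK r = lker r ∩ normaliser (fun e f => (IsIdem e ∧ IsIdem f) ∧ r e f) := by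
  obtain ⟨heq, hl⟩ := hr
  ext a
  simp only [InK, lker, normaliser, Set.mem_setOf_eq, Set.mem_inter_iff]
  constructor
  · intro ha
    refine ⟨⟨a * inv a, idem_mul_inv a, ha⟩, fun e f hef => ?_⟩
    obtain ⟨⟨he, hf⟩, href⟩ := hef
    have abs_e : a * e * inv a * a = a * e := conj_absorb a he
    have abs_f : a * f * inv a * a = a * f := conj_absorb a hf
    have abs_e' : inv a * e * a * inv a = inv a * e := by
      have := conj_absorb (inv a) he; rwa [inv_inv'] at this
    have abs_f' : inv a * f * a * inv a = inv a * f := by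
      have := conj_absorb (inv a) hf; rwa [inv_inv'] at this
    constructor
    · refine ⟨⟨conj_idem a he, conj_idem a hf⟩, ?_⟩
      have s1 : r (a * e) (a * e * inv a) := by
        have := hl a (a * inv a) (a * e * inv a) ha
        rwa [abs_e, ← mul_assoc, abs_e] at this
      have s3 : r (a * f) (a * f * inv a) := by
        have := hl a (a * inv a) (a * f * inv a) ha
        rwa [abs_f, ← mul_assoc, abs_f] at this
      have s2 : r (a * e) (a * f) := hl e f a href
      exact heq.trans (heq.trans (heq.symm s1) s2) s3
    · have hie : IsIdem (inv a * e * a) := by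
        have := conj_idem (inv a) he; rwa [inv_inv'] at this
      have hif : IsIdem (inv a * f * a) := by
        have := conj_idem (inv a) hf; rwa [inv_inv'] at this
      refine ⟨⟨hie, hif⟩, ?_⟩
      have t1 : r (inv a * e * a) (inv a * e) := by
        have := hl a (a * inv a) (inv a * e) ha
        rwa [← mul_assoc, abs_e'] at this
      have t3 : r (inv a * f * a) (inv a * f) := by
        have := hl a (a * inv a) (inv a * f) ha
        rwa [← mul_assoc, abs_f'] at this
      have t2 : r (inv a * e) (inv a * f) := hl e f (inv a) href
      exact heq.trans (heq.trans t1 t2) (heq.symm t3)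
  · rintro ⟨⟨e, he, hae⟩, hN⟩
    have he' : IsIdem (a * inv a * e) := idem_mul (idem_mul_inv a) he
    have hae' : r a (a * inv a * e) := by
      have := hl a e (a * inv a) hae
      rwa [mul_inv_mul] at this
    have h2 : r (a * inv a * e * a) a := by
      have h1 := hl a (a * inv a * e) (a * inv a * e) hae'
      rw [he'] at h1
      exact heq.trans h1 (heq.symm hae')
    have h3 : r (inv a * (a * inv a * e) * a) (inv a * a) := by
      have := hl (a * inv a * e * a) a (inv a) h2
      simpa only [mul_assoc] using this
    have hid1 : IsIdem (inv a * (a * inv a * e) * a) := by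
      have := conj_idem (inv a) he'; rwa [inv_inv'] at this
    have hτ := (hN (inv a * (a * inv a * e) * a) (inv a * a)
      ⟨⟨hid1, idem_inv_mul a⟩, h3⟩).1
    have eq1 : a * (inv a * a) * inv a = a * inv a := by
      rw [← mul_assoc, mul_inv_mul]
    have eq2 : a * (inv a * (a * inv a * e) * a) * inv a = a * inv a * e := by
      calc a * (inv a * (a * inv a * e) * a) * inv a
          = a * inv a * (a * inv a) * (e * (a * inv a)) := by simp only [mul_assoc]
        _ = a * inv a * (e * (a * inv a)) := by rw [idem_mul_inv a]
        _ = a * inv a * (a * inv a * e) := by rw [idem_comm he (idem_mul_inv a)]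
        _ = a * inv a * (a * inv a) * e := by rw [← mul_assoc]
        _ = a * inv a * e := by rw [idem_mul_inv a]
    rw [eq1, eq2] at hτ
    exact heq.trans hae' hτ.2
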